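/- For every pair of Born-Wolf indices (n, m) and (n', m'), j(n, m) = j(n', m') implies (n, m) = (n', m'), where j(n,m) = n(n+1)/2 + |m| + u(m); in particular for fixed n, distinct admissible m yield Noll indices that exhaust the integer interval [n(n+1)/2 + 1, n(n+1)/2 + n + 1]. -/
import Mathlib

private lemma tri_step (n : ℕ) : (n+1)*(n+2)/2 = n*(n+1)/2 + (n+1) := by
  have h : (n+1)*(n+2) = n*(n+1) + 2*(n+1) := by ring
  have h2 : n*(n+1) % 2 = 0 := by
    rcases Nat.even_mul_succ_self n with ⟨k, hk⟩; omega
  omega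

private lemma tri_mono {a b : ℕ} (h : a ≤ b) : a*(a+1)/2 ≤ b*(b+1)/2 :=
  Nat.div_le_div_right (Nat.mul_le_mul h (by omega))

private lemma n_eq {n n' a a' : ℕ} (ha : 1 ≤ a) (ha' : a ≤ n + 1)
    (hb : 1 ≤ a') (hb' : a' ≤ n' + 1)
    (h : n*(n+1)/2 + a = n'*(n'+1)/2 + a') : n = n' := by
  rcases lt_trichotomy n n' with hlt | heq | hgt
  · have h1 : (n+1)*(n+2)/2 ≤ n'*(n'+1)/2 := tri_mono (by omega)
    have h2 := tri_step n
    omega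
  · exact heq
  · have h1 : (n'+1)*(n'+2)/2 ≤ n*(n+1)/2 := tri_mono (by omega)
    have h2 := tri_step n'
    omega

theorem noll_injective_and_exhaustive :
    (∀ (n : ℕ) (m : ℤ) (n' : ℕ) (m' : ℤ),
        m.natAbs ≤ n → (2 : ℤ) ∣ ((n : ℤ) - m) →
        m'.natAbs ≤ n' → (2 : ℤ) ∣ ((n' : ℤ) - m') →
        n * (n + 1) / 2 + m.natAbs + (if 0 ≤ m then 1 else 0) =
          n' * (n' + 1) / 2 + m'.natAbs + (if 0 ≤ m' then 1 else 0) →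
        n = n' ∧ m = m') ∧
    (∀ n : ℕ,
      {j : ℕ | ∃ m : ℤ, m.natAbs ≤ n ∧ (2 : ℤ) ∣ ((n : ℤ) - m) ∧
          j = n * (n + 1) / 2 + m.natAbs + (if 0 ≤ m then 1 else 0)} =
        Set.Icc (n * (n + 1) / 2 + 1) (n * (n + 1) / 2 + n + 1)) := by
  constructor
  · intro n m n' m' h1 h2 h3 h4 h5
    have hn : n = n' := by
      apply n_eq (a := m.natAbs + (if 0 ≤ m then 1 else 0))
        (a' := m'.natAbs + (if 0 ≤ m' then 1 else 0))
      · split <;> omega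
      · split <;> omega
      · split <;> omega
      · split <;> omega
      · omega
    subst hn
    refine ⟨rfl, ?_⟩
    split_ifs at h5 <;> omega
  · intro n
    ext j
    simp only [Set.mem_setOf_eq, Set.mem_Icc]
    constructor
    · rintro ⟨m, h1, h2, rfl⟩
      split <;> omega
    · rintro ⟨hlo, hhi⟩
      set T := n * (n + 1) / 2 with hT
      by_cases hp : (2 : ℤ) ∣ ((n : ℤ) - ((j : ℤ) - T - 1))
      · refine ⟨(j : ℤ) - T - 1, by omega, hp, ?_⟩
        rw [if_pos (by omega)]
        omega
      · refine ⟨-((j : ℤ) - T), by omega, by omega, ?_⟩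
        rw [if_neg (by omega)]
        omega
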